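/- (Pointwise Criterion) Let →_o and →_b be relations from terms to multidistributions, and ⇒_o, ⇒_b their liftings to multidistributions. If for every term M, M →_b 𝔫 and M →_o 𝔰 imply the existence of 𝔯 with 𝔫 ⇒_o 𝔯 and 𝔰 ⇒_b 𝔯, then ⇒_o and ⇒_b diamond-commute: for all multidistributions 𝔪, if 𝔪 ⇒_b 𝔫 and 𝔪 ⇒_o 𝔰, then there exists 𝔯 with 𝔫 ⇒_o 𝔯 and 𝔰 ⇒_b 𝔯. -/
import Mathlib

open scoped NNReal ENNReal

/-- A (raw) multidistribution on `X`: a finite multiset of weighted elements. -/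
abbrev MDist (X : Type) := Multiset (ℝ≥0 × X)

namespace MDist

/-- Scalar multiplication of a multidistribution. -/
def scale {X : Type} (p : ℝ≥0) (m : MDist X) : MDist X :=
  m.map fun q => (p * q.1, q.2)

/-- The singleton multidistribution `[1 M]`. -/
def single {X : Type} (M : X) : MDist X := {(1, M)}

/-- A multidistribution is proper when every weight lies in `(0,1]` and the
weights sum to at most `1`. -/
def Proper {X : Type} (m : MDist X) : Prop :=
  (∀ q ∈ m, 0 < q.1 ∧ q.1 ≤ 1) ∧ (m.map Prod.fst).sum ≤ 1

/-- The probability that the distribution associated to a multidistribution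
assigns to an event `A`. -/
noncomputable def mass {X : Type} (m : MDist X) (A : Set X) : ℝ≥0∞ :=
  (m.map fun q => A.indicator (fun _ => (q.1 : ℝ≥0∞)) q.2).sum

end MDist

/-- One component of the lifting: either keep the term or perform a step. -/
def LiftTerm {X : Type} (r : X → MDist X → Prop) (M : X) (m : MDist X) : Prop :=
  m = MDist.single M ∨ r M m

/-- The lifting of a relation `r ⊆ X × MDist X` to a binary relation on
multidistributions. -/
inductive Lift {X : Type} (r : X → MDist X → Prop) : MDist X → MDist X → Prop
  | nil : Lift r 0 0
  | cons {p : ℝ≥0} {M : X} {m s t : MDist X} :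
      LiftTerm r M m → Lift r s t → Lift r ((p, M) ::ₘ s) (MDist.scale p m + t)

lemma scale_one {X : Type} (m : MDist X) : MDist.scale 1 m = m := by
  simp [MDist.scale]

lemma scale_add {X : Type} (p : ℝ≥0) (a b : MDist X) :
    MDist.scale p (a + b) = MDist.scale p a + MDist.scale p b := by
  simp [MDist.scale]

lemma scale_scale {X : Type} (p q : ℝ≥0) (a : MDist X) :
    MDist.scale p (MDist.scale q a) = MDist.scale (p * q) a := by
  simp [MDist.scale, Multiset.map_map, mul_assoc]

lemma scale_cons {X : Type} (p q : ℝ≥0) (M : X) (s : MDist X) :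
    MDist.scale p ((q, M) ::ₘ s) = (p * q, M) ::ₘ MDist.scale p s := by
  simp [MDist.scale]

lemma lift_refl {X : Type} (r : X → MDist X → Prop) (m : MDist X) : Lift r m m := by
  induction m using Multiset.induction with
  | empty => exact Lift.nil
  | cons a s ih =>
    obtain ⟨p, M⟩ := a
    have := Lift.cons (p := p) (M := M) (m := MDist.single M) (Or.inl rfl) ih
    simpa [MDist.single, MDist.scale, Multiset.singleton_add] using this

lemma lift_single_of {X : Type} {r : X → MDist X → Prop} {M : X} {m : MDist X}
    (h : LiftTerm r M m) : Lift r (MDist.single M) m := by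
  have := Lift.cons (p := 1) h Lift.nil
  simpa [MDist.single, scale_one] using this

lemma lift_add {X : Type} {r : X → MDist X → Prop} {a b c d : MDist X}
    (h1 : Lift r a b) (h2 : Lift r c d) : Lift r (a + c) (b + d) := by
  induction h1 with
  | nil => simpa using h2
  | cons ht hs ih =>
    rw [Multiset.cons_add, add_assoc]
    exact Lift.cons ht ih

lemma lift_scale {X : Type} {r : X → MDist X → Prop} {a b : MDist X} (p : ℝ≥0)
    (h : Lift r a b) : Lift r (MDist.scale p a) (MDist.scale p b) := by
  induction h with
  | nil => simpa [MDist.scale] using Lift.nil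
  | cons ht hs ih =>
    rw [scale_cons, scale_add, scale_scale]
    exact Lift.cons ht ih

lemma lift_zero {X : Type} {r : X → MDist X → Prop} {m t : MDist X}
    (h : Lift r m t) (hm : m = 0) : t = 0 := by
  cases h with
  | nil => rfl
  | cons _ _ => exact absurd hm (Multiset.cons_ne_zero)

lemma lift_cons_inv {X : Type} {r : X → MDist X → Prop} {m t : MDist X}
    (h : Lift r m t) :
    ∀ (p : ℝ≥0) (M : X) (s : MDist X), m = (p, M) ::ₘ s →
      ∃ n u, LiftTerm r M n ∧ Lift r s u ∧ t = MDist.scale p n + u := by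
  induction h with
  | nil =>
    intro p M s hm
    exact absurd hm.symm (Multiset.cons_ne_zero)
  | @cons q N n' s' t' ht hs ih =>
    intro p M s hm
    rcases Multiset.cons_eq_cons.mp hm.symm with ⟨he, hs'⟩ | ⟨_, s'', h1, h2⟩
    · obtain ⟨rfl, rfl⟩ := Prod.mk.injEq .. ▸ he
      exact ⟨n', t', ht, hs' ▸ hs, rfl⟩
    · obtain ⟨n, u, hn, hu, ht'⟩ := ih p M s'' h2
      refine ⟨n, MDist.scale q n' + u, hn, ?_, ?_⟩
      · rw [h1]; exact Lift.cons ht hu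
      · rw [ht', add_left_comm]

lemma join_single {X : Type} {ro rb : X → MDist X → Prop}
    (h : ∀ (M : X) (n s : MDist X), rb M n → ro M s →
      ∃ r, Lift ro n r ∧ Lift rb s r)
    {M : X} {n s : MDist X} (hn : LiftTerm rb M n) (hs : LiftTerm ro M s) :
    ∃ r, Lift ro n r ∧ Lift rb s r := by
  rcases hn with rfl | hn
  · exact ⟨s, lift_single_of hs, lift_refl _ _⟩
  · rcases hs with rfl | hs
    · exact ⟨n, lift_refl _ _, lift_single_of (Or.inr hn)⟩
    · exact h M n s hn hs

/-- Pointwise Criterion: if single steps of `→_b` and `→_o` from a common term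
can be joined by the liftings, then the liftings `⇒_b` and `⇒_o`
diamond-commute. -/
theorem pointwise_criterion {X : Type} [Countable X]
    (ro rb : X → MDist X → Prop)
    (h : ∀ (M : X) (n s : MDist X), rb M n → ro M s →
      ∃ r, Lift ro n r ∧ Lift rb s r) :
    ∀ m n s : MDist X, Lift rb m n → Lift ro m s →
      ∃ r, Lift ro n r ∧ Lift rb s r := by
  intro m n s hb
  induction hb generalizing s with
  | nil =>
    intro ho
    have : s = 0 := lift_zero ho rfl
    subst this
    exact ⟨0, Lift.nil, Lift.nil⟩
  | @cons p M n₁ m' n' ht hb' ih =>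
    intro ho
    obtain ⟨s₁, s', hs₁, hs', rfl⟩ := lift_cons_inv ho p M m' rfl
    obtain ⟨r₁, hr₁o, hr₁b⟩ := join_single h ht hs₁
    obtain ⟨r', hr'o, hr'b⟩ := ih s' hs'
    exact ⟨MDist.scale p r₁ + r',
      lift_add (lift_scale p hr₁o) hr'o,
      lift_add (lift_scale p hr₁b) hr'b⟩
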